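/- Let n ≥ 3, let H be an n×n real symmetric positive definite matrix, and let G ∈ ℝⁿ. Define D as the diagonal matrix with entries D_jj = √((H⁻¹)_{jj}), ρ = D⁻¹ H⁻¹ D⁻¹, and Z = −D⁻¹ H⁻¹ G with entries Z₁,…,Z_n. Let h* be the unique minimizer over {h ∈ ℝⁿ : h₁ ≤ 0 and h₂ ≤ 0} of h ↦ ‖h + H⁻¹G‖_H². Then: (i) if Z₁ < 0 and Z₂ < 0, then h* = −H⁻¹G; (ii) if Z₁ ≥ 0 and Z₂ − ρ₁₂Z₁ < 0, then h*₁ = 0 and h*_j = D_jj(Z_j − ρ_{1j}Z₁) for j = 2,…,n; (iii) if Z₂ ≥ 0 and Z₁ − ρ₂₁Z₂ < 0, then h*₂ = 0 and h*_j = D_jj(Z_j − ρ_{2j}Z₂) for j ∈ {1,3,4,…,n}; (iv) otherwise, h*₁ = h*₂ = 0 and h*_{I^c} = −(H_{I^c I^c})⁻¹ G_{I^c}, where I^c = {3,…,n}. -/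

import Mathlib

open Matrix

def normHsq {n : ℕ} (H : Matrix (Fin n) (Fin n) ℝ) (a : Fin n → ℝ) : ℝ :=
  a ⬝ᵥ H.mulVec a

lemma normHsq_expand {n : ℕ} (H : Matrix (Fin n) (Fin n) ℝ) (hsym : Hᵀ = H)
    (x d : Fin n → ℝ) :
    normHsq H (x + d) = normHsq H x + 2 * ((H *ᵥ x) ⬝ᵥ d) + normHsq H d := by
  unfold normHsq
  rw [Matrix.mulVec_add, dotProduct_add, add_dotProduct, add_dotProduct]
  have h1 : d ⬝ᵥ H *ᵥ x = (H *ᵥ x) ⬝ᵥ d := dotProduct_comm _ _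
  have h2 : x ⬝ᵥ H *ᵥ d = (H *ᵥ x) ⬝ᵥ d := by
    rw [Matrix.dotProduct_mulVec x H d, ← Matrix.mulVec_transpose, hsym]
  rw [h1, h2]; ring

lemma posDef_submatrix_inj {m : Type*} [Fintype m] {n : ℕ}
    {M : Matrix (Fin n) (Fin n) ℝ} (hM : M.PosDef) {e : m → Fin n}
    (he : Function.Injective e) : (M.submatrix e e).PosDef := by
  refine Matrix.PosDef.of_dotProduct_mulVec_pos (hM.1.submatrix e) (fun x hx => ?_)
  classical
  set y : Fin n → ℝ := Function.extend e x (0 : Fin n → ℝ) with hy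
  have hye : ∀ a, y (e a) = x a := fun a => he.extend_apply x (0 : Fin n → ℝ) a
  have hy0 : ∀ i, i ∉ Finset.univ.image e → y i = 0 := by
    intro i hi
    have : ¬∃ a, e a = i := by
      rintro ⟨a, rfl⟩; exact hi (Finset.mem_image_of_mem e (Finset.mem_univ a))
    rw [hy, Function.extend_apply' x (0 : Fin n → ℝ) i this]
    rfl
  have hyne : y ≠ 0 := by
    obtain ⟨a, ha⟩ := Function.ne_iff.mp hx
    exact Function.ne_iff.mpr ⟨e a, by simpa [hye a] using ha⟩
  have hmv : ∀ i, (M *ᵥ y) i = ∑ a : m, M i (e a) * x a := by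
    intro i
    have hv : ∀ k ∈ Finset.univ, k ∉ Finset.univ.image e → M i k * y k = 0 := by
      intro k _ hk; rw [hy0 k hk, mul_zero]
    calc (M *ᵥ y) i = ∑ k : Fin n, M i k * y k := rfl
      _ = ∑ k ∈ Finset.univ.image e, M i k * y k :=
          (Finset.sum_subset (Finset.subset_univ _) hv).symm
      _ = ∑ a : m, M i (e a) * y (e a) := Finset.sum_image (fun a _ b _ h => he h)
      _ = ∑ a : m, M i (e a) * x a := by simp [hye]
  have hval : star y ⬝ᵥ M *ᵥ y = star x ⬝ᵥ (M.submatrix e e) *ᵥ x := by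
    have hv : ∀ k ∈ Finset.univ, k ∉ Finset.univ.image e → y k * (M *ᵥ y) k = 0 := by
      intro k _ hk; rw [hy0 k hk, zero_mul]
    calc star y ⬝ᵥ M *ᵥ y = ∑ k : Fin n, y k * (M *ᵥ y) k := by
          simp [dotProduct]
      _ = ∑ k ∈ Finset.univ.image e, y k * (M *ᵥ y) k :=
          (Finset.sum_subset (Finset.subset_univ _) hv).symm
      _ = ∑ a : m, y (e a) * (M *ᵥ y) (e a) := Finset.sum_image (fun a _ b _ h => he h)
      _ = ∑ a : m, x a * ∑ b : m, M (e a) (e b) * x b := by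
          simp only [hye, hmv]
      _ = star x ⬝ᵥ (M.submatrix e e) *ᵥ x := by
          simp [dotProduct, Matrix.mulVec, Matrix.submatrix_apply]
  rw [← hval]
  exact hM.dotProduct_mulVec_pos hyne

lemma key_min {n : ℕ} [NeZero n] (H : Matrix (Fin n) (Fin n) ℝ) (hH : H.PosDef)
    (c hstar h g : Fin n → ℝ)
    (hmin : ∀ y : Fin n → ℝ, y 0 ≤ 0 → y 1 ≤ 0 →
      normHsq H (hstar + c) ≤ normHsq H (y + c))
    (hs0 : hstar 0 ≤ 0) (hs1 : hstar 1 ≤ 0)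
    (h0 : h 0 ≤ 0) (h1 : h 1 ≤ 0)
    (hg : g = H *ᵥ (h + c))
    (hg0 : g 0 ≤ 0) (hg1 : g 1 ≤ 0)
    (hcomp0 : g 0 * h 0 = 0) (hcomp1 : g 1 * h 1 = 0)
    (hgz : ∀ j : Fin n, j ≠ 0 → j ≠ 1 → g j = 0) :
    hstar = h := by
  have hsym : Hᵀ = H := by
    have := hH.1
    rwa [Matrix.IsHermitian, conjTranspose_eq_transpose_of_trivial] at this
  have hdecomp : hstar + c = (h + c) + (hstar - h) := by abel
  have hexp : normHsq H (hstar + c) =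
      normHsq H (h + c) + 2 * (g ⬝ᵥ (hstar - h)) + normHsq H (hstar - h) := by
    rw [hdecomp, normHsq_expand H hsym, hg]
  have hnn : 0 ≤ g ⬝ᵥ (hstar - h) := by
    rw [dotProduct]
    apply Finset.sum_nonneg
    intro j _
    simp only [Pi.sub_apply]
    by_cases hj0 : j = 0
    · subst hj0
      nlinarith [mul_nonneg (neg_nonneg.mpr hg0) (neg_nonneg.mpr hs0)]
    · by_cases hj1 : j = 1
      · subst hj1
        nlinarith [mul_nonneg (neg_nonneg.mpr hg1) (neg_nonneg.mpr hs1)]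
      · rw [hgz j hj0 hj1, zero_mul]
  have hle : normHsq H (hstar + c) ≤ normHsq H (h + c) := hmin h h0 h1
  have hq : normHsq H (hstar - h) ≤ 0 := by linarith
  have hz : hstar - h = 0 := by
    by_contra hne
    have := hH.dotProduct_mulVec_pos hne
    rw [star_trivial] at this
    exact absurd hq (not_le.mpr (by simpa [normHsq] using this))
  exact sub_eq_zero.mp hz

lemma sign_lemma (p z0 z1 : ℝ) (hsq : p * p < 1)
    (hn1 : z0 < 0 → 0 ≤ z1) (hn2 : 0 ≤ z0 → 0 ≤ z1 - p * z0)
    (hn3 : 0 ≤ z1 → 0 ≤ z0 - p * z1) :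
    p * z1 ≤ z0 ∧ p * z0 ≤ z1 := by
  rcases lt_or_ge z0 0 with hz0 | hz0
  · have hz1 : 0 ≤ z1 := hn1 hz0
    have h3 : 0 ≤ z0 - p * z1 := hn3 hz1
    refine ⟨by linarith, ?_⟩
    rcases le_or_gt 0 p with hp | hp
    · nlinarith
    · nlinarith
  · have h2 : 0 ≤ z1 - p * z0 := hn2 hz0
    refine ⟨?_, by linarith⟩
    rcases lt_or_ge z1 0 with hz1 | hz1
    · rcases le_or_gt 0 p with hp | hp
      · nlinarith
      · nlinarith
    · have h3 : 0 ≤ z0 - p * z1 := hn3 hz1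
      linarith

lemma nonpos_of_coef (c x r : ℝ) (hc : 0 < c) (heq : c * x = r) (hr : r ≤ 0) :
    x ≤ 0 := by nlinarith

lemma mul_nonpos'' (c t : ℝ) (hc : 0 ≤ c) (ht : t ≤ 0) : c * t ≤ 0 := by nlinarith

lemma rho_sq_lt_one (p d0 d1 : ℝ) (hd0 : 0 < d0) (hd1 : 0 < d1)
    (hdet : 0 < d0 * d0 * (d1 * d1) - p * d0 * d1 * (p * d0 * d1)) :
    p * p < 1 := by nlinarith [mul_pos hd0 hd1]

theorem stmt5 {n : ℕ} [NeZero n] (hn : 3 ≤ n)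
    (H : Matrix (Fin n) (Fin n) ℝ) (hH : H.PosDef)
    (G : Fin n → ℝ)
    (D : Matrix (Fin n) (Fin n) ℝ)
    (hD : D = Matrix.diagonal (fun j => Real.sqrt (H⁻¹ j j)))
    (ρ : Matrix (Fin n) (Fin n) ℝ) (hρ : ρ = D⁻¹ * H⁻¹ * D⁻¹)
    (Z : Fin n → ℝ) (hZ : Z = -(D⁻¹.mulVec (H⁻¹.mulVec G)))
    (hstar : Fin n → ℝ)
    (hstar_mem : hstar 0 ≤ 0 ∧ hstar 1 ≤ 0)
    (hstar_min : ∀ y : Fin n → ℝ, y 0 ≤ 0 → y 1 ≤ 0 →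
      normHsq H (hstar + H⁻¹.mulVec G) ≤ normHsq H (y + H⁻¹.mulVec G)) :
    (Z 0 < 0 → Z 1 < 0 → hstar = -(H⁻¹.mulVec G)) ∧
    (0 ≤ Z 0 → Z 1 - ρ 0 1 * Z 0 < 0 →
      hstar 0 = 0 ∧ ∀ j : Fin n, j ≠ 0 → hstar j = D j j * (Z j - ρ 0 j * Z 0)) ∧
    (0 ≤ Z 1 → Z 0 - ρ 1 0 * Z 1 < 0 →
      hstar 1 = 0 ∧ ∀ j : Fin n, j ≠ 1 → hstar j = D j j * (Z j - ρ 1 j * Z 1)) ∧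
    (¬ (Z 0 < 0 ∧ Z 1 < 0) →
     ¬ (0 ≤ Z 0 ∧ Z 1 - ρ 0 1 * Z 0 < 0) →
     ¬ (0 ≤ Z 1 ∧ Z 0 - ρ 1 0 * Z 1 < 0) →
      hstar 0 = 0 ∧ hstar 1 = 0 ∧
      ∀ j : {i : Fin n // 2 ≤ (i : ℕ)},
        hstar (j : Fin n) =
          -(((H.submatrix (fun a : {i : Fin n // 2 ≤ (i : ℕ)} => (a : Fin n))
                (fun a : {i : Fin n // 2 ≤ (i : ℕ)} => (a : Fin n)))⁻¹).mulVec
              (fun a : {i : Fin n // 2 ≤ (i : ℕ)} => G (a : Fin n)) j)) := by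
  classical
  have hv0 : ((0 : Fin n) : ℕ) = 0 := Fin.val_zero n
  have hv1 : ((1 : Fin n) : ℕ) = 1 := by
    rw [Fin.val_one' n]; exact Nat.mod_eq_of_lt (by omega)
  have h01 : (0 : Fin n) ≠ 1 := by
    intro h; rw [Fin.ext_iff, hv0, hv1] at h; omega
  have hHi : (H⁻¹).PosDef := hH.inv
  have hsymm : ∀ i j : Fin n, H⁻¹ i j = H⁻¹ j i := by
    intro i j
    have h2 := hHi.1.apply i j
    rw [star_trivial] at h2
    exact h2.symm
  have hdet : IsUnit H.det := isUnit_iff_ne_zero.mpr hH.det_pos.ne'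
  have hright : H * H⁻¹ = 1 := Matrix.mul_nonsing_inv H hdet
  have hleft : H⁻¹ * H = 1 := Matrix.nonsing_inv_mul H hdet
  have hdiagpos : ∀ j, 0 < H⁻¹ j j := by
    intro j
    have hne : (Pi.single j 1 : Fin n → ℝ) ≠ 0 :=
      Function.ne_iff.mpr ⟨j, by simp⟩
    have := hHi.dotProduct_mulVec_pos hne
    simpa [Matrix.mulVec_single, dotProduct, Pi.single_apply] using this
  have hDjj : ∀ j, D j j = Real.sqrt (H⁻¹ j j) := fun j => by
    rw [hD, Matrix.diagonal_apply_eq]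
  have hDpos : ∀ j, 0 < D j j := fun j => by
    rw [hDjj]; exact Real.sqrt_pos.mpr (hdiagpos j)
  have hDsq : ∀ j, D j j * D j j = H⁻¹ j j := fun j => by
    rw [hDjj]; exact Real.mul_self_sqrt (hdiagpos j).le
  have hsqne : ∀ j, Real.sqrt (H⁻¹ j j) ≠ 0 := by
    intro j; rw [← hDjj j]; exact (hDpos j).ne'
  have hDinv : D⁻¹ = Matrix.diagonal (fun j => (Real.sqrt (H⁻¹ j j))⁻¹) := by
    apply Matrix.inv_eq_right_inv
    rw [hD, Matrix.diagonal_mul_diagonal]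
    ext i k
    by_cases hik : i = k
    · subst hik
      simp [Matrix.diagonal_apply_eq, Matrix.one_apply_eq, mul_inv_cancel₀ (hsqne i)]
    · simp [Matrix.diagonal_apply_ne _ hik, Matrix.one_apply_ne hik]
  have hHiG : ∀ j, (H⁻¹ *ᵥ G) j = -(D j j * Z j) := by
    intro j
    have h1 : Z j = -((Real.sqrt (H⁻¹ j j))⁻¹ * (H⁻¹ *ᵥ G) j) := by
      rw [hZ, hDinv]
      simp only [Pi.neg_apply, Matrix.mulVec_diagonal]
    have hne : Real.sqrt (H⁻¹ j j) ≠ 0 := by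
      rw [← hDjj j]; exact (hDpos j).ne'
    rw [h1, hDjj j]
    rw [mul_neg, neg_neg, ← mul_assoc, mul_inv_cancel₀ (hsqne j), one_mul]
  have hρval : ∀ i j, ρ i j = (D i i)⁻¹ * H⁻¹ i j * (D j j)⁻¹ := by
    intro i j
    rw [hρ, hDinv, Matrix.mul_diagonal, Matrix.diagonal_mul, hDjj i, hDjj j]
  refine ⟨?_, ?_, ?_, ?_⟩
  -- Case (i)
  · intro hZ0 hZ1
    set cand : Fin n → ℝ := -(H⁻¹ *ᵥ G) with hcand
    have hcand0 : cand 0 = D 0 0 * Z 0 := by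
      simp only [hcand, Pi.neg_apply, hHiG 0, neg_neg]
    have hcand1 : cand 1 = D 1 1 * Z 1 := by
      simp only [hcand, Pi.neg_apply, hHiG 1, neg_neg]
    have hc0 : cand 0 ≤ 0 := by
      rw [hcand0]; exact (mul_neg_of_pos_of_neg (hDpos 0) hZ0).le
    have hc1 : cand 1 ≤ 0 := by
      rw [hcand1]; exact (mul_neg_of_pos_of_neg (hDpos 1) hZ1).le
    have hgdef : (0 : Fin n → ℝ) = H *ᵥ (cand + H⁻¹ *ᵥ G) := by
      rw [hcand]; simp
    exact key_min H hH _ hstar cand 0 hstar_min hstar_mem.1 hstar_mem.2 hc0 hc1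
      hgdef le_rfl le_rfl (zero_mul _) (zero_mul _) (fun j _ _ => rfl)
  -- Case (ii)
  · intro hZ0 hcond
    set cand : Fin n → ℝ := fun j => D j j * (Z j - ρ 0 j * Z 0) with hcand
    have hρ00 : ρ 0 0 = 1 := by
      rw [hρval 0 0, ← hDsq 0]
      field_simp
      exact div_self (hDpos 0).ne'
    have hcand0 : cand 0 = 0 := by
      simp only [hcand, hρ00]; ring
    have hcand1le : cand 1 ≤ 0 := by
      have : cand 1 = D 1 1 * (Z 1 - ρ 0 1 * Z 0) := by simp only [hcand]
      rw [this]
      exact (mul_neg_of_pos_of_neg (hDpos 1) hcond).le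
    set w : Fin n → ℝ := Pi.single 0 (-(Z 0) * (D 0 0)⁻¹) with hw
    have hxw : cand + H⁻¹ *ᵥ G = H⁻¹ *ᵥ w := by
      funext j
      have hmv : (H⁻¹ *ᵥ w) j = H⁻¹ j 0 * (-(Z 0) * (D 0 0)⁻¹) := by
        rw [hw, Matrix.mulVec_single]; rfl
      have hdj : D j j ≠ 0 := (hDpos j).ne'
      have hd0 : D 0 0 ≠ 0 := (hDpos 0).ne'
      show cand j + (H⁻¹ *ᵥ G) j = _
      rw [hmv, hHiG j]
      simp only [hcand]
      rw [hρval 0 j, hsymm j 0]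
      field_simp
      ring
    have hgval : w = H *ᵥ (cand + H⁻¹ *ᵥ G) := by
      rw [hxw, Matrix.mulVec_mulVec, hright, Matrix.one_mulVec]
    have hw0 : w 0 ≤ 0 := by
      have : w 0 = -(Z 0) * (D 0 0)⁻¹ := by rw [hw]; simp
      rw [this]
      have h2 : (0:ℝ) ≤ (D 0 0)⁻¹ := (inv_nonneg).mpr (hDpos 0).le
      nlinarith
    have hw1 : w 1 = 0 := by
      rw [hw]; simp [Pi.single_apply, h01.symm]
    have hwz : ∀ j : Fin n, j ≠ 0 → j ≠ 1 → w j = 0 := by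
      intro j hj0 _
      rw [hw]; simp [Pi.single_apply, hj0]
    have heq := key_min H hH _ hstar cand w hstar_min hstar_mem.1 hstar_mem.2
      (le_of_eq hcand0) hcand1le hgval hw0 (le_of_eq hw1)
      (by rw [hcand0, mul_zero]) (by rw [hw1, zero_mul]) hwz
    refine ⟨by rw [heq, hcand0], ?_⟩
    intro j _
    rw [heq]
  -- Case (iii)
  · intro hZ1 hcond
    set cand : Fin n → ℝ := fun j => D j j * (Z j - ρ 1 j * Z 1) with hcand
    have hρ11 : ρ 1 1 = 1 := by
      rw [hρval 1 1, ← hDsq 1]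
      field_simp
      exact div_self (hDpos 1).ne'
    have hcand1 : cand 1 = 0 := by
      simp only [hcand, hρ11]; ring
    have hcand0le : cand 0 ≤ 0 := by
      have : cand 0 = D 0 0 * (Z 0 - ρ 1 0 * Z 1) := by simp only [hcand]
      rw [this]
      exact (mul_neg_of_pos_of_neg (hDpos 0) hcond).le
    set w : Fin n → ℝ := Pi.single 1 (-(Z 1) * (D 1 1)⁻¹) with hw
    have hxw : cand + H⁻¹ *ᵥ G = H⁻¹ *ᵥ w := by
      funext j
      have hmv : (H⁻¹ *ᵥ w) j = H⁻¹ j 1 * (-(Z 1) * (D 1 1)⁻¹) := by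
        rw [hw, Matrix.mulVec_single]; rfl
      have hdj : D j j ≠ 0 := (hDpos j).ne'
      have hd1 : D 1 1 ≠ 0 := (hDpos 1).ne'
      show cand j + (H⁻¹ *ᵥ G) j = _
      rw [hmv, hHiG j]
      simp only [hcand]
      rw [hρval 1 j, hsymm j 1]
      field_simp
      ring
    have hgval : w = H *ᵥ (cand + H⁻¹ *ᵥ G) := by
      rw [hxw, Matrix.mulVec_mulVec, hright, Matrix.one_mulVec]
    have hw1' : w 1 ≤ 0 := by
      have : w 1 = -(Z 1) * (D 1 1)⁻¹ := by rw [hw]; simp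
      rw [this]
      have h2 : (0:ℝ) ≤ (D 1 1)⁻¹ := (inv_nonneg).mpr (hDpos 1).le
      nlinarith
    have hw0 : w 0 = 0 := by
      rw [hw]; simp [Pi.single_apply, h01]
    have hwz : ∀ j : Fin n, j ≠ 0 → j ≠ 1 → w j = 0 := by
      intro j _ hj1
      rw [hw]; simp [Pi.single_apply, hj1]
    have heq := key_min H hH _ hstar cand w hstar_min hstar_mem.1 hstar_mem.2
      hcand0le (le_of_eq hcand1) hgval (le_of_eq hw0) hw1'
      (by rw [hw0, zero_mul]) (by rw [hcand1, mul_zero]) hwz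
    refine ⟨by rw [heq, hcand1], ?_⟩
    intro j _
    rw [heq]
  -- Case (iv)
  · intro hn1 hn2 hn3
    push_neg at hn1 hn2 hn3
    have he : Function.Injective (fun a : {i : Fin n // 2 ≤ (i : ℕ)} => (a : Fin n)) :=
      Subtype.coe_injective
    set A := H.submatrix (fun a : {i : Fin n // 2 ≤ (i : ℕ)} => (a : Fin n))
      (fun a : {i : Fin n // 2 ≤ (i : ℕ)} => (a : Fin n)) with hA
    set b : {i : Fin n // 2 ≤ (i : ℕ)} → ℝ := fun a => G (a : Fin n) with hb
    have hApd : A.PosDef := posDef_submatrix_inj hH he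
    have hAdet : IsUnit A.det := isUnit_iff_ne_zero.mpr hApd.det_pos.ne'
    have hAinv : A * A⁻¹ = 1 := Matrix.mul_nonsing_inv A hAdet
    set cand : Fin n → ℝ := fun j =>
      if h : 2 ≤ (j : ℕ) then -((A⁻¹ *ᵥ b) ⟨j, h⟩) else 0 with hcand
    have hlt0 : ¬ 2 ≤ ((0 : Fin n) : ℕ) := by omega
    have hlt1 : ¬ 2 ≤ ((1 : Fin n) : ℕ) := by omega
    have hcand0 : cand 0 = 0 := by simp only [hcand]; rw [dif_neg hlt0]
    have hcand1 : cand 1 = 0 := by simp only [hcand]; rw [dif_neg hlt1]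
    have hcandS : ∀ (j : Fin n) (hj : 2 ≤ (j : ℕ)), cand j = -((A⁻¹ *ᵥ b) ⟨j, hj⟩) := by
      intro j hj; simp only [hcand]; rw [dif_pos hj]
    have hclass : ∀ j : Fin n, ¬ 2 ≤ (j : ℕ) → j = 0 ∨ j = 1 := by
      intro j hj
      by_cases hj0 : (j : ℕ) = 0
      · exact Or.inl (Fin.val_injective (by omega))
      · exact Or.inr (Fin.val_injective (by omega))
    set g : Fin n → ℝ := H *ᵥ (cand + H⁻¹ *ᵥ G) with hg
    have hgG : ∀ j, g j = (H *ᵥ cand) j + G j := by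
      intro j
      rw [hg, Matrix.mulVec_add, Pi.add_apply, Matrix.mulVec_mulVec, hright,
        Matrix.one_mulVec]
    have hgS : ∀ j : Fin n, 2 ≤ (j : ℕ) → g j = 0 := by
      intro j hj
      have h1 : (H *ᵥ cand) j = -((A *ᵥ (A⁻¹ *ᵥ b)) ⟨j, hj⟩) := by
        have hvan : ∀ k ∈ Finset.univ, k ∉ Finset.univ.image
            (fun a : {i : Fin n // 2 ≤ (i : ℕ)} => (a : Fin n)) → H j k * cand k = 0 := by
          intro k _ hk
          have hk2 : ¬ 2 ≤ (k : ℕ) := by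
            intro h2
            exact hk (Finset.mem_image.mpr ⟨⟨k, h2⟩, Finset.mem_univ _, rfl⟩)
          simp only [hcand]; rw [dif_neg hk2, mul_zero]
        calc (H *ᵥ cand) j = ∑ k : Fin n, H j k * cand k := rfl
          _ = ∑ k ∈ Finset.univ.image
              (fun a : {i : Fin n // 2 ≤ (i : ℕ)} => (a : Fin n)), H j k * cand k :=
              (Finset.sum_subset (Finset.subset_univ _) hvan).symm
          _ = ∑ a : {i : Fin n // 2 ≤ (i : ℕ)}, H j (a : Fin n) * cand (a : Fin n) :=
              Finset.sum_image (fun a _ c _ h => he h)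
          _ = ∑ a : {i : Fin n // 2 ≤ (i : ℕ)}, A ⟨j, hj⟩ a * -((A⁻¹ *ᵥ b) a) := by
              refine Finset.sum_congr rfl (fun a _ => ?_)
              rw [hcandS _ a.2]
              rfl
          _ = -((A *ᵥ (A⁻¹ *ᵥ b)) ⟨j, hj⟩) := by
              simp [Matrix.mulVec, dotProduct, mul_neg, Finset.sum_neg_distrib]
      rw [hgG j, h1, Matrix.mulVec_mulVec, hAinv, Matrix.one_mulVec]
      have hbj : b ⟨j, hj⟩ = G j := rfl
      rw [hbj]
      exact neg_add_cancel (G j)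
    have hgz : ∀ j : Fin n, j ≠ 0 → j ≠ 1 → g j = 0 := by
      intro j hj0 hj1
      refine hgS j ?_
      by_contra h2
      rcases hclass j h2 with h | h
      · exact hj0 h
      · exact hj1 h
    have hxg : cand + H⁻¹ *ᵥ G = H⁻¹ *ᵥ g := by
      rw [hg, Matrix.mulVec_mulVec, hleft, Matrix.one_mulVec]
    have hx : ∀ i, cand i + (H⁻¹ *ᵥ G) i = H⁻¹ i 0 * g 0 + H⁻¹ i 1 * g 1 := by
      intro i
      have h1 : cand i + (H⁻¹ *ᵥ G) i = (H⁻¹ *ᵥ g) i := congrFun hxg i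
      rw [h1]
      have hvan : ∀ k ∈ Finset.univ, k ∉ ({0, 1} : Finset (Fin n)) →
          H⁻¹ i k * g k = 0 := by
        intro k _ hk
        simp only [Finset.mem_insert, Finset.mem_singleton] at hk
        push_neg at hk
        rw [hgz k hk.1 hk.2, mul_zero]
      calc (H⁻¹ *ᵥ g) i = ∑ k : Fin n, H⁻¹ i k * g k := rfl
        _ = ∑ k ∈ ({0, 1} : Finset (Fin n)), H⁻¹ i k * g k :=
            (Finset.sum_subset (Finset.subset_univ _) hvan).symm
        _ = H⁻¹ i 0 * g 0 + H⁻¹ i 1 * g 1 := Finset.sum_pair h01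
    have E0 : H⁻¹ 0 0 * g 0 + H⁻¹ 0 1 * g 1 = -(D 0 0 * Z 0) := by
      rw [← hx 0, hcand0, hHiG 0, zero_add]
    have E1 : H⁻¹ 1 0 * g 0 + H⁻¹ 1 1 * g 1 = -(D 1 1 * Z 1) := by
      rw [← hx 1, hcand1, hHiG 1, zero_add]
    have e2inj : Function.Injective (![(0 : Fin n), 1]) := by
      intro a c hac
      fin_cases a <;> fin_cases c <;>
        first
          | rfl
          | exact absurd hac h01
          | exact absurd hac.symm h01
    have hB : ((H⁻¹).submatrix ![(0 : Fin n), 1] ![(0 : Fin n), 1]).PosDef :=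
      posDef_submatrix_inj hHi e2inj
    have hdet2 : 0 < H⁻¹ 0 0 * H⁻¹ 1 1 - H⁻¹ 0 1 * H⁻¹ 1 0 := by
      have h2 := hB.det_pos
      rw [Matrix.det_fin_two] at h2
      simpa using h2
    have hd0 : D 0 0 ≠ 0 := (hDpos 0).ne'
    have hd1 : D 1 1 ≠ 0 := (hDpos 1).ne'
    have hr : H⁻¹ 0 1 = ρ 0 1 * D 0 0 * D 1 1 := by
      have h5 : ρ 0 1 * D 0 0 * D 1 1
          = H⁻¹ 0 1 * ((D 0 0)⁻¹ * D 0 0) * ((D 1 1)⁻¹ * D 1 1) := by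
        rw [hρval 0 1]; ring
      rw [h5, inv_mul_cancel₀ hd0, inv_mul_cancel₀ hd1, mul_one, mul_one]
    have hr' : H⁻¹ 1 0 = H⁻¹ 0 1 := hsymm 1 0
    have hρ10 : ρ 1 0 = ρ 0 1 := by
      rw [hρval 1 0, hρval 0 1, hsymm 1 0]; ring
    have hρsq : ρ 0 1 * ρ 0 1 < 1 := by
      rw [(hDsq 0).symm, (hDsq 1).symm, hr', hr] at hdet2
      exact rho_sq_lt_one _ _ _ (hDpos 0) (hDpos 1) hdet2
    have hZboth : ρ 0 1 * Z 1 ≤ Z 0 ∧ ρ 0 1 * Z 0 ≤ Z 1 :=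
      sign_lemma (ρ 0 1) (Z 0) (Z 1) hρsq hn1 hn2
        (fun h => by have h4 := hn3 h; rwa [hρ10] at h4)
    have hg0le : g 0 ≤ 0 := by
      have hkey : (H⁻¹ 0 0 * H⁻¹ 1 1 - H⁻¹ 0 1 * H⁻¹ 1 0) * g 0
          = -(H⁻¹ 1 1 * (D 0 0 * Z 0)) + H⁻¹ 0 1 * (D 1 1 * Z 1) := by
        linear_combination H⁻¹ 1 1 * E0 - H⁻¹ 0 1 * E1
      have hrhs : -(H⁻¹ 1 1 * (D 0 0 * Z 0)) + H⁻¹ 0 1 * (D 1 1 * Z 1) ≤ 0 := by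
        have h4 : -(H⁻¹ 1 1 * (D 0 0 * Z 0)) + H⁻¹ 0 1 * (D 1 1 * Z 1)
            = (D 0 0 * (D 1 1 * D 1 1)) * (ρ 0 1 * Z 1 - Z 0) := by
          rw [(hDsq 1).symm, hr]; ring
        rw [h4]
        exact mul_nonpos'' _ _ (mul_nonneg (hDpos 0).le (mul_nonneg (hDpos 1).le (hDpos 1).le)) (by linarith [hZboth.1])
      exact nonpos_of_coef _ _ _ hdet2 hkey hrhs
    have hg1le : g 1 ≤ 0 := by
      have hkey : (H⁻¹ 0 0 * H⁻¹ 1 1 - H⁻¹ 0 1 * H⁻¹ 1 0) * g 1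
          = -(H⁻¹ 0 0 * (D 1 1 * Z 1)) + H⁻¹ 1 0 * (D 0 0 * Z 0) := by
        linear_combination H⁻¹ 0 0 * E1 - H⁻¹ 1 0 * E0
      have hrhs : -(H⁻¹ 0 0 * (D 1 1 * Z 1)) + H⁻¹ 1 0 * (D 0 0 * Z 0) ≤ 0 := by
        have h4 : -(H⁻¹ 0 0 * (D 1 1 * Z 1)) + H⁻¹ 1 0 * (D 0 0 * Z 0)
            = (D 1 1 * (D 0 0 * D 0 0)) * (ρ 0 1 * Z 0 - Z 1) := by
          rw [(hDsq 0).symm, hr', hr]; ring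
        rw [h4]
        exact mul_nonpos'' _ _ (mul_nonneg (hDpos 1).le (mul_nonneg (hDpos 0).le (hDpos 0).le)) (by linarith [hZboth.2])
      exact nonpos_of_coef _ _ _ hdet2 hkey hrhs
    have heq := key_min H hH _ hstar cand g hstar_min hstar_mem.1 hstar_mem.2
      (le_of_eq hcand0) (le_of_eq hcand1) hg hg0le hg1le
      (by rw [hcand0, mul_zero]) (by rw [hcand1, mul_zero]) hgz
    refine ⟨by rw [heq, hcand0], by rw [heq, hcand1], ?_⟩
    intro j
    rw [heq, hcandS _ j.2]
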